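/- Define λ_i^σ = max_{τ ∈ A(i,σ)} ρ_i(σ,τ)·μ(σ)/μ(τ), b_i = max_{τ ∈ Ω} |{σ ∈ f_i : τ ∈ A(i,σ)}|, and γ_i = b_i · max_{σ ∈ f_i} λ_i^σ. Then γ_i ≥ μ(f_i). -/
import Mathlib


/-- With `λ_i^σ = max_{τ ∈ A(i,σ)} ρ_i(σ,τ) μ(σ)/μ(τ)`,
`b_i = max_τ |{σ ∈ f_i : τ ∈ A(i,σ)}|` and `γ_i = b_i · max_{σ ∈ f_i} λ_i^σ`,
one has `γ_i ≥ μ(f_i)`. -/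
theorem stmt_3 {Ω : Type*} [Fintype Ω] [DecidableEq Ω]
    (μ : Ω → ℝ) (hμpos : ∀ σ, 0 < μ σ) (hμ1 : ∑ σ, μ σ = 1)
    (fi : Finset Ω) (hfi : fi.Nonempty)
    (A : Ω → Finset Ω) (hA : ∀ σ ∈ fi, (A σ).Nonempty)
    (ρ : Ω → Ω → ℝ) (hρ0 : ∀ σ τ, 0 ≤ ρ σ τ)
    (hρsupp : ∀ σ ∈ fi, ∀ τ, τ ∉ A σ → ρ σ τ = 0)
    (hρsum : ∀ σ ∈ fi, ∑ τ, ρ σ τ = 1)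
    (lam : Ω → ℝ)
    (hlam : ∀ σ ∈ fi, IsGreatest {x : ℝ | ∃ τ ∈ A σ, x = ρ σ τ * μ σ / μ τ} (lam σ))
    (b : ℕ)
    (hb : IsGreatest {n : ℕ | ∃ τ : Ω, n = (fi.filter fun σ => τ ∈ A σ).card} b)
    (lmax : ℝ) (hlmax : IsGreatest {x : ℝ | ∃ σ ∈ fi, x = lam σ} lmax) :
    ∑ σ ∈ fi, μ σ ≤ (b : ℝ) * lmax := by
  -- lmax is nonnegative
  have hlmax0 : 0 ≤ lmax := by
    obtain ⟨σ, hσ⟩ := hfi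
    obtain ⟨τ, hτ, hval⟩ := (hlam σ hσ).1
    have h1 : 0 ≤ lam σ := by
      rw [hval]
      exact div_nonneg (mul_nonneg (hρ0 σ τ) (hμpos σ).le) (hμpos τ).le
    exact h1.trans (hlmax.2 ⟨σ, hσ, rfl⟩)
  -- key pointwise bound
  have key : ∀ σ ∈ fi, μ σ ≤ lmax * ∑ τ ∈ A σ, μ τ := by
    intro σ hσ
    have h1 : μ σ = ∑ τ ∈ A σ, ρ σ τ * μ σ := by
      rw [← Finset.sum_mul]
      have : ∑ τ ∈ A σ, ρ σ τ = 1 := by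
        rw [← hρsum σ hσ]
        exact Finset.sum_subset (Finset.subset_univ _)
          (fun τ _ hτ => hρsupp σ hσ τ hτ)
      rw [this, one_mul]
    rw [h1, Finset.mul_sum]
    apply Finset.sum_le_sum
    intro τ hτ
    have hle : ρ σ τ * μ σ / μ τ ≤ lam σ := (hlam σ hσ).2 ⟨τ, hτ, rfl⟩
    have hle2 : lam σ ≤ lmax := hlmax.2 ⟨σ, hσ, rfl⟩
    have hμτ := hμpos τ
    calc ρ σ τ * μ σ = (ρ σ τ * μ σ / μ τ) * μ τ := by field_simp
      _ ≤ lmax * μ τ := by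
          apply mul_le_mul_of_nonneg_right (hle.trans hle2) hμτ.le
  calc ∑ σ ∈ fi, μ σ ≤ ∑ σ ∈ fi, lmax * ∑ τ ∈ A σ, μ τ :=
        Finset.sum_le_sum key
    _ = lmax * ∑ σ ∈ fi, ∑ τ ∈ A σ, μ τ := by rw [Finset.mul_sum]
    _ = lmax * ∑ τ : Ω, ((fi.filter fun σ => τ ∈ A σ).card : ℝ) * μ τ := by
        congr 1
        have : ∀ σ ∈ fi, ∑ τ ∈ A σ, μ τ = ∑ τ : Ω, if τ ∈ A σ then μ τ else 0 := by
          intro σ _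
          rw [Finset.sum_ite_mem, Finset.univ_inter]
        rw [Finset.sum_congr rfl this, Finset.sum_comm]
        congr 1
        ext τ
        rw [Finset.sum_ite, Finset.sum_const_zero, add_zero, Finset.sum_const,
          nsmul_eq_mul]
    _ ≤ lmax * ∑ τ : Ω, (b : ℝ) * μ τ := by
        apply mul_le_mul_of_nonneg_left _ hlmax0
        apply Finset.sum_le_sum
        intro τ _
        apply mul_le_mul_of_nonneg_right _ (hμpos τ).le
        exact_mod_cast hb.2 ⟨τ, rfl⟩
    _ = (b : ℝ) * lmax := by rw [← Finset.mul_sum, hμ1, mul_one, mul_comm]
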